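/- Let m be a positive multiple of 3. Then m − 1 has a witness if and only if m/3 has a witness. -/
import Mathlib


/-- The auxiliary sequence: `a 1 = 3`, `a i = 3 * a (i-1) - 1` for `i ≥ 2`. -/
def a : ℕ → ℕ
  | 0 => 0
  | 1 => 3
  | n + 2 => 3 * a (n + 1) - 1

/-- `R(m, i) = max(0, ⌊(m − a i − 1)/3^i⌋)` (truncated ℕ-subtraction gives the max). -/
def Rmi (m i : ℕ) : ℕ := (m - a i - 1) / 3 ^ i

/-- `R(m) = ∑_{i=1}^∞ R(m, i)`; all terms with `i > m` vanish, so a finite sum suffices. -/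
def R (m : ℕ) : ℕ := ∑ i ∈ Finset.Icc 1 m, Rmi m i

/-- `m` has a witness pair `(k, i)` of positive integers with `m = k·3^i + a i`. -/
def HasWitness (m : ℕ) : Prop := ∃ k i : ℕ, 1 ≤ k ∧ 1 ≤ i ∧ m = k * 3 ^ i + a i

/-- `B` is the `B`-sequence: `B 0 = 0`, `B n = n` for `1 ≤ n ≤ 5`, and
`B n = B (n - B (n-1)) + B (n - B (n-2)) + B (n - B (n-3))` for `n ≥ 6`. -/
def IsBSeq (B : ℕ → ℕ) : Prop :=
  B 0 = 0 ∧ (∀ n, 1 ≤ n → n ≤ 5 → B n = n) ∧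
    ∀ n, 6 ≤ n → B n = B (n - B (n - 1)) + B (n - B (n - 2)) + B (n - B (n - 3))

lemma a_ge (i : ℕ) (hi : 1 ≤ i) : 3 ≤ a i := by
  induction i with
  | zero => omega
  | succ n ih =>
    match n with
    | 0 => simp [a]
    | m + 1 =>
      have := ih (by omega)
      show 3 ≤ 3 * a (m + 1) - 1
      omega

/-- for `m` a positive multiple of 3, `m - 1` has a witness iff `m/3` has one. -/
theorem stmt_6 (m : ℕ) (hm : 1 ≤ m) (h3 : 3 ∣ m) :
    HasWitness (m - 1) ↔ HasWitness (m / 3) := by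
  obtain ⟨t, rfl⟩ := h3
  have ht : 1 ≤ t := by omega
  have hdiv : 3 * t / 3 = t := by omega
  rw [hdiv]
  constructor
  · rintro ⟨k, i, hk, hi, h⟩
    match i, hi with
    | 1, _ =>
      simp only [a, pow_one] at h
      omega
    | (j + 2), _ =>
      refine ⟨k, j + 1, hk, by omega, ?_⟩
      have ha3 : 3 ≤ a (j + 1) := a_ge (j + 1) (by omega)
      have hA : a (j + 2) = 3 * a (j + 1) - 1 := rfl
      have hp : (3:ℕ) ^ (j + 2) = 3 * 3 ^ (j + 1) := by ring
      rw [hA, hp] at h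
      have h2 : k * (3 * 3 ^ (j + 1)) = 3 * (k * 3 ^ (j + 1)) := by ring
      rw [h2] at h
      omega
  · rintro ⟨k, i, hk, hi, h⟩
    refine ⟨k, i + 1, hk, by omega, ?_⟩
    have ha3 : 3 ≤ a i := a_ge i hi
    have hA : a (i + 1) = 3 * a i - 1 := by
      match i, hi with
      | (j + 1), _ => rfl
    have hp : (3:ℕ) ^ (i + 1) = 3 * 3 ^ i := by ring
    rw [hA, hp]
    have h2 : k * (3 * 3 ^ i) = 3 * (k * 3 ^ i) := by ring
    rw [h2]
    omega
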